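/- Let f : ℂ → ℂ be a complex polynomial with f(0) = 0 of multiplicity k ≥ 2 at the origin. Define G_t(z) = −2i(f'(z))² conj(f''(z)) + 2ti(a+ib) f''(z) conj(f'(z)), and H_t(z) = −2i·(∂G_t/∂z)(z)·(∂J/∂z̄)(z) + 2i·(∂G_t/∂z̄)(z)·(∂J/∂z)(z) where J(z) = |f'(z)|² − t²(a²+b²). If z satisfies G_t(z) = 0 and H_t(z) = 0, then (f'(z))²·conj(f'(z))·ψ(z) = 0, where ψ(z) = 3|f''(z)|⁴ − (f''(z))²·conj(f'(z)·f'''(z)) − conj(f''(z))²·f'(z)·f'''(z). -/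

import Mathlib

open Complex

noncomputable section

def d1 (f : Polynomial ℂ) (z : ℂ) : ℂ := f.derivative.eval z
def d2 (f : Polynomial ℂ) (z : ℂ) : ℂ := f.derivative.derivative.eval z
def d3 (f : Polynomial ℂ) (z : ℂ) : ℂ := f.derivative.derivative.derivative.eval z

/-- `G_t(z) = −2i(f'(z))² conj(f''(z)) + 2ti(a+ib) f''(z) conj(f'(z))`. -/
def Gt (f : Polynomial ℂ) (a b t : ℝ) (z : ℂ) : ℂ :=
  -2 * Complex.I * (d1 f z) ^ 2 * (starRingEnd ℂ) (d2 f z) +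
    2 * t * Complex.I * (a + Complex.I * b) * d2 f z * (starRingEnd ℂ) (d1 f z)

/-- Wirtinger derivative `∂G_t/∂z`, computed as a mixed polynomial in `z` and `z̄`. -/
def GtDz (f : Polynomial ℂ) (a b t : ℝ) (z : ℂ) : ℂ :=
  -4 * Complex.I * d1 f z * d2 f z * (starRingEnd ℂ) (d2 f z) +
    2 * t * Complex.I * (a + Complex.I * b) * d3 f z * (starRingEnd ℂ) (d1 f z)

/-- Wirtinger derivative `∂G_t/∂z̄`, computed as a mixed polynomial in `z` and `z̄`. -/
def GtDzbar (f : Polynomial ℂ) (a b t : ℝ) (z : ℂ) : ℂ :=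
  -2 * Complex.I * (d1 f z) ^ 2 * (starRingEnd ℂ) (d3 f z) +
    2 * t * Complex.I * (a + Complex.I * b) * d2 f z * (starRingEnd ℂ) (d2 f z)

/-- `∂J/∂z = f''(z) conj(f'(z))`. -/
def JDz (f : Polynomial ℂ) (z : ℂ) : ℂ := d2 f z * (starRingEnd ℂ) (d1 f z)

/-- `∂J/∂z̄ = conj(f''(z)) f'(z)`. -/
def JDzbar (f : Polynomial ℂ) (z : ℂ) : ℂ := (starRingEnd ℂ) (d2 f z) * d1 f z

/-- `H_t = −2i (∂G_t/∂z)(∂J/∂z̄) + 2i (∂G_t/∂z̄)(∂J/∂z)`. -/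
def Ht (f : Polynomial ℂ) (a b t : ℝ) (z : ℂ) : ℂ :=
  -2 * Complex.I * GtDz f a b t z * JDzbar f z + 2 * Complex.I * GtDzbar f a b t z * JDz f z

/-- `ψ(z) = 3|f''|⁴ − (f'')² conj(f' f''') − conj(f'')² f' f'''`. -/
def psi (f : Polynomial ℂ) (z : ℂ) : ℂ :=
  3 * ((‖d2 f z‖ : ℝ) : ℂ) ^ 4 -
    (d2 f z) ^ 2 * (starRingEnd ℂ) (d1 f z * d3 f z) -
    ((starRingEnd ℂ) (d2 f z)) ^ 2 * d1 f z * d3 f z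

theorem psi_vanishes_on_common_zeros (f : Polynomial ℂ) (k : ℕ) (hk : 2 ≤ k)
    (h0 : f.eval 0 = 0) (hmult : f.rootMultiplicity 0 = k)
    (a b t : ℝ) (z : ℂ) (hG : Gt f a b t z = 0) (hH : Ht f a b t z = 0) :
    (d1 f z) ^ 2 * (starRingEnd ℂ) (d1 f z) * psi f z = 0 := by
  have h2 : ((‖d2 f z‖ : ℂ)) ^ 2
      = d2 f z * (starRingEnd ℂ) (d2 f z) := by
    rw [Complex.mul_conj, ← Complex.ofReal_pow, Complex.sq_norm]
  have habs : ((‖d2 f z‖ : ℂ)) ^ 4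
      = (d2 f z) ^ 2 * ((starRingEnd ℂ) (d2 f z)) ^ 2 := by
    rw [show (4 : ℕ) = 2 * 2 from rfl, pow_mul, h2, mul_pow]
  unfold Gt at hG
  unfold Ht GtDz GtDzbar JDz JDzbar at hH
  unfold psi
  rw [habs, map_mul]
  set A := d1 f z
  set B := d2 f z
  set C := d3 f z
  linear_combination
    ((starRingEnd ℂ) A * (Complex.I / 2) * (starRingEnd ℂ) B * (B ^ 2 - A * C)) * hG
    + (-((starRingEnd ℂ) A * B) / 4) * hH
    + (3 * A ^ 2 * B ^ 2 * (starRingEnd ℂ) A * ((starRingEnd ℂ) B) ^ 2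
        - A ^ 2 * B ^ 2 * ((starRingEnd ℂ) A) ^ 2 * (starRingEnd ℂ) C
        - A ^ 3 * C * (starRingEnd ℂ) A * ((starRingEnd ℂ) B) ^ 2) * Complex.I_sq

end
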